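/- Define j₀(θ) = j(θ) + (1/2)log θ, where j(θ) = -(1/2)log(1-4(θ+1)λ(θ)) + (1/2)log 2. Then j₀ extends continuously to θ = 0 with j₀(0) = 0. -/

import Mathlib

open Real Filter Set Topology

noncomputable def artanh (x : ℝ) : ℝ := (1/2) * Real.log ((1+x)/(1-x))

noncomputable def thetaF (l : ℝ) : ℝ := -1 + _root_.artanh (Real.sqrt (1-4*l)) / Real.sqrt (1-4*l)

lemma sq_lt_one_of_mem {x : ℝ} (hx : x ∈ Set.Ioo (-1:ℝ) 1) : x^2 < 1 := by
  nlinarith [hx.1, hx.2]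

lemma hasDerivAt_artanh' {x : ℝ} (hx : x ∈ Set.Ioo (-1:ℝ) 1) :
    HasDerivAt _root_.artanh (1/(1-x^2)) x := by
  obtain ⟨h1, h2⟩ := hx
  have hp1 : (0:ℝ) < 1 + x := by linarith
  have hp2 : (0:ℝ) < 1 - x := by linarith
  have ha : HasDerivAt (fun y : ℝ => Real.log (1+y)) (1/(1+x)) x := by
    have hi : HasDerivAt (fun y : ℝ => 1+y) 1 x := (hasDerivAt_id x).const_add 1
    exact hi.log (ne_of_gt hp1)
  have hb : HasDerivAt (fun y : ℝ => Real.log (1-y)) (-(1/(1-x))) x := by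
    have hi : HasDerivAt (fun y : ℝ => 1-y) (-1) x := by
      simpa using ((hasDerivAt_id x).const_sub 1)
    simpa [neg_div] using hi.log (ne_of_gt hp2)
  have hd : HasDerivAt (fun y : ℝ => (1/2) * (Real.log (1+y) - Real.log (1-y)))
      (1/(1-x^2)) x := by
    have := (ha.sub hb).const_mul (1/2 : ℝ)
    refine this.congr_deriv ?_
    have hq : 1 - x^2 = (1+x)*(1-x) := by ring
    rw [hq]
    field_simp
    ring
  apply hd.congr_of_eventuallyEq
  have hmem : Set.Ioo (-1:ℝ) 1 ∈ 𝓝 x := isOpen_Ioo.mem_nhds ⟨h1, h2⟩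
  filter_upwards [hmem] with y hy
  have hy1 : (0:ℝ) < 1 + y := by linarith [hy.1]
  have hy2 : (0:ℝ) < 1 - y := by linarith [hy.2]
  unfold _root_.artanh
  rw [Real.log_div (ne_of_gt hy1) (ne_of_gt hy2)]

lemma mono_helper (F F' : ℝ → ℝ)
    (hd : ∀ x ∈ Set.Ioo (-1:ℝ) 1, HasDerivAt F (F' x) x)
    (hpos : ∀ x ∈ Set.Ioo (-1:ℝ) 1, 0 ≤ F' x) :
    MonotoneOn F (Set.Ioo (-1:ℝ) 1) := by
  apply monotoneOn_of_hasDerivWithinAt_nonneg (f' := F') (convex_Ioo _ _)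
  · exact fun x hx => (hd x hx).continuousAt.continuousWithinAt
  · intro x hx
    rw [interior_Ioo] at hx
    exact (hd x hx).hasDerivWithinAt
  · intro x hx
    rw [interior_Ioo] at hx
    exact hpos x hx

lemma artanh_ge {s : ℝ} (h0 : 0 ≤ s) (h1 : s < 1) : s + s^3/3 ≤ _root_.artanh s := by
  have key : MonotoneOn (fun x => _root_.artanh x - (x + x^3/3)) (Set.Ioo (-1:ℝ) 1) := by
    apply mono_helper _ (fun x => 1/(1-x^2) - (1 + x^2))
    · intro x hx
      have h2 : HasDerivAt (fun y : ℝ => y + y^3/3) (1 + x^2) x := by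
        have := (hasDerivAt_id x).add ((hasDerivAt_pow 3 x).div_const 3)
        refine this.congr_deriv ?_
        norm_num
      exact (hasDerivAt_artanh' hx).sub h2
    · intro x hx
      have hpos : (0:ℝ) < 1 - x^2 := by linarith [sq_lt_one_of_mem hx]
      rw [sub_nonneg, le_div_iff₀ hpos]
      nlinarith [sq_nonneg (x^2)]
  have h0' : (0:ℝ) ∈ Set.Ioo (-1:ℝ) 1 := by norm_num
  have hs' : s ∈ Set.Ioo (-1:ℝ) 1 := ⟨by linarith, h1⟩
  have := key h0' hs' h0
  simp only [_root_.artanh] at this ⊢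
  norm_num at this
  linarith

lemma artanh_le {s : ℝ} (h0 : 0 ≤ s) (h1 : s < 1) :
    _root_.artanh s ≤ s + s^3/(3*(1-s^2)) := by
  have key : MonotoneOn (fun x => x + x^3/(3*(1-x^2)) - _root_.artanh x) (Set.Ioo (-1:ℝ) 1) := by
    apply mono_helper _
      (fun x => (1 + (3*x^2 * (3*(1-x^2)) - x^3 * (3*(-(2*x))))/(3*(1-x^2))^2) - 1/(1-x^2))
    · intro x hx
      have hpos : (0:ℝ) < 1 - x^2 := by linarith [sq_lt_one_of_mem hx]
      have hden : (3:ℝ)*(1-x^2) ≠ 0 := by positivity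
      have hc : HasDerivAt (fun y : ℝ => y^3) (3*x^2) x := by
        simpa using hasDerivAt_pow 3 x
      have hdd : HasDerivAt (fun y : ℝ => 3*(1-y^2)) (3*(-(2*x))) x := by
        have : HasDerivAt (fun y : ℝ => 1-y^2) (-(2*x)) x := by
          simpa [sub_eq_add_neg] using ((hasDerivAt_pow 2 x).neg.const_add 1)
        exact this.const_mul 3
      have hq := hc.div hdd hden
      exact (((hasDerivAt_id x).add hq)).sub (hasDerivAt_artanh' hx)
    · intro x hx
      have hpos : (0:ℝ) < 1 - x^2 := by linarith [sq_lt_one_of_mem hx]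
      have key : (1 + (3*x^2 * (3*(1-x^2)) - x^3 * (3*(-(2*x))))/(3*(1-x^2))^2) - 1/(1-x^2)
          = 6*x^4/(3*(1-x^2))^2 := by
        field_simp
        ring
      have h6 : 0 ≤ 6*x^4/(3*(1-x^2))^2 := by positivity
      linarith [key, h6]
  have h0' : (0:ℝ) ∈ Set.Ioo (-1:ℝ) 1 := by norm_num
  have hs' : s ∈ Set.Ioo (-1:ℝ) 1 := ⟨by linarith, h1⟩
  have := key h0' hs' h0
  simp only [_root_.artanh] at this ⊢
  norm_num at this
  linarith

theorem stmt14 (lam : ℝ → ℝ)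
    (hmem : ∀ θ > (0:ℝ), lam θ ∈ Set.Ioo (0:ℝ) (1/4))
    (hinv : ∀ θ > (0:ℝ), thetaF (lam θ) = θ)
    (j : ℝ → ℝ)
    (hj : ∀ θ, j θ = -(1/2) * Real.log (1 - 4*(θ+1)*lam θ) + (1/2) * Real.log 2) :
    Tendsto (fun θ => j θ + (1/2) * Real.log θ) (nhdsWithin 0 (Set.Ioi (0:ℝ)))
      (nhds 0) := by
  -- Basic per-θ facts
  have main : ∀ θ > (0:ℝ),
      0 < 1 - 4*(θ+1)*lam θ ∧
      2*θ*(1-3*θ) ≤ 1 - 4*(θ+1)*lam θ ∧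
      1 - 4*(θ+1)*lam θ ≤ θ*(2+3*θ) := by
    intro θ hθ
    obtain ⟨hl1, hl2⟩ := hmem θ hθ
    set l := lam θ
    have h4 : 0 < 1 - 4*l := by linarith
    set s := Real.sqrt (1-4*l) with hsdef
    have hs0 : 0 < s := Real.sqrt_pos.mpr h4
    have hs2 : s^2 = 1-4*l := Real.sq_sqrt h4.le
    have hs1 : s < 1 := by nlinarith
    have hs2lt : s^2 < 1 := by nlinarith
    have hth : _root_.artanh s = (θ+1)*s := by
      have h := hinv θ hθ
      unfold thetaF at h
      rw [← hsdef] at h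
      have : _root_.artanh s / s = θ + 1 := by linarith
      field_simp at this
      linarith
    have hlow : s^2 ≤ 3*θ := by
      have := artanh_ge hs0.le hs1
      rw [hth] at this
      nlinarith
    have hhigh : 3*θ*(1-s^2) ≤ s^2 := by
      have := artanh_le hs0.le hs1
      rw [hth] at this
      have hden : 0 < 3*(1-s^2) := by linarith
      have h2 : θ*s ≤ s^3/(3*(1-s^2)) := by linarith
      rw [le_div_iff₀ hden] at h2
      nlinarith [h2, hs0]
    have hD : 1 - 4*(θ+1)*l = s^2 - θ*(1-s^2) := by
      linear_combination (-(1+θ)) * hs2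
    refine ⟨?_, ?_, ?_⟩
    · rw [hD]; nlinarith
    · rw [hD]; nlinarith
    · rw [hD]; nlinarith
  -- the ratio tends to 1
  have hratio : Tendsto (fun θ => 2*θ/(1 - 4*(θ+1)*lam θ))
      (nhdsWithin 0 (Set.Ioi (0:ℝ))) (nhds 1) := by
    have hlowt : Tendsto (fun θ : ℝ => 2/(2+3*θ)) (nhdsWithin 0 (Set.Ioi (0:ℝ))) (nhds 1) := by
      have hc : ContinuousAt (fun θ : ℝ => 2/(2+3*θ)) 0 := by
        apply ContinuousAt.div
        · fun_prop
        · fun_prop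
        · norm_num
      have h2 : Tendsto (fun θ : ℝ => 2/(2+3*θ)) (nhdsWithin 0 (Set.Ioi (0:ℝ)))
          (nhds (2/(2+3*0))) := hc.tendsto.mono_left nhdsWithin_le_nhds
      norm_num at h2
      exact h2
    have hhight : Tendsto (fun θ : ℝ => 1/(1-3*θ)) (nhdsWithin 0 (Set.Ioi (0:ℝ))) (nhds 1) := by
      have hc : ContinuousAt (fun θ : ℝ => 1/(1-3*θ)) 0 := by
        apply ContinuousAt.div
        · fun_prop
        · fun_prop
        · norm_num
      have h2 : Tendsto (fun θ : ℝ => 1/(1-3*θ)) (nhdsWithin 0 (Set.Ioi (0:ℝ)))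
          (nhds (1/(1-3*0))) := hc.tendsto.mono_left nhdsWithin_le_nhds
      norm_num at h2
      simpa [one_div] using h2
    have hmem3 : Set.Ioo (0:ℝ) (1/3) ∈ nhdsWithin 0 (Set.Ioi (0:ℝ)) :=
      Ioo_mem_nhdsGT_of_mem ⟨le_refl 0, by norm_num⟩
    apply tendsto_of_tendsto_of_tendsto_of_le_of_le' hlowt hhight
    · filter_upwards [hmem3] with θ hθ
      obtain ⟨hpos, hlo, hhi⟩ := main θ hθ.1
      have h23 : 0 < θ*(2+3*θ) := by nlinarith [hθ.1]
      have hθ1 := hθ.1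
      rw [div_le_div_iff₀ (by linarith) hpos]
      nlinarith
    · filter_upwards [hmem3] with θ hθ
      obtain ⟨hpos, hlo, hhi⟩ := main θ hθ.1
      have h13 : 0 < 1-3*θ := by linarith [hθ.2]
      rw [div_le_div_iff₀ hpos h13]
      nlinarith [hθ.1]
  -- conclude via log
  have hlog : Tendsto (fun θ => (1/2) * Real.log (2*θ/(1 - 4*(θ+1)*lam θ)))
      (nhdsWithin 0 (Set.Ioi (0:ℝ))) (nhds 0) := by
    have := ((Real.continuousAt_log one_ne_zero).tendsto.comp hratio).const_mul (1/2 : ℝ)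
    norm_num [Function.comp] at this
    convert this using 1
  apply hlog.congr'
  filter_upwards [self_mem_nhdsWithin] with θ (hθ : 0 < θ)
  obtain ⟨hpos, -, -⟩ := main θ hθ
  rw [hj θ, Real.log_div (by positivity) (ne_of_gt hpos),
    Real.log_mul (by norm_num) (ne_of_gt hθ)]
  ring
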